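/- Let p ≥ 2 be an integer. (i) If m = (p choose 2), then g(m) = p − 1, and a graph G with m edges attains Mad(G) = p − 1 if and only if its non-isolated vertices induce a copy of K_p. (ii) If (p choose 2) < m < ((p+1) choose 2), say m = (p choose 2) + r with 0 < r < p, then g(m) = max{p − 1, 2m/(p+1)}; moreover, a graph G with m edges attains g(m) precisely in the following cases: if 0 < r < (p−1)/2, exactly when G contains K_p as a subgraph; if (p−1)/2 < r < p, exactly when G has exactly p+1 non-isolated vertices; and if r = (p−1)/2, exactly when G contains K_p or has exactly p+1 non-isolated vertices. -/

import Mathlib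

/-- Number of edges of a finite simple graph. -/
noncomputable def edgeCnt {V : Type} [Fintype V] (G : SimpleGraph V) : ℕ :=
  G.edgeSet.ncard

/-- Number of edges of `G` with both endpoints in `X`. -/
noncomputable def inducedEdgeCnt {V : Type} [Fintype V] (G : SimpleGraph V) (X : Finset V) : ℕ :=
  {e : Sym2 V | e ∈ G.edgeSet ∧ ∀ v ∈ e, v ∈ X}.ncard

/-- Maximum average degree of a finite simple graph. -/
noncomputable def Mad {V : Type} [Fintype V] (G : SimpleGraph V) : ℝ :=
  sSup {d : ℝ | ∃ X : Finset V, X.Nonempty ∧ d = 2 * (inducedEdgeCnt G X : ℝ) / (X.card : ℝ)}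

/-- A `k`-decomposition of the complete graph `K_n`. -/
def IsKDecomp {k n : ℕ} (G : Fin k → SimpleGraph (Fin n)) : Prop :=
  (∀ i j, i ≠ j → Disjoint (G i).edgeSet (G j).edgeSet) ∧
  (⋃ i, (G i).edgeSet) = (⊤ : SimpleGraph (Fin n)).edgeSet

/-- `M(k,n)`: maximum of `Mad(G_1)+…+Mad(G_k)` over all `k`-decompositions of `K_n`. -/
noncomputable def MSum (k n : ℕ) : ℝ :=
  sSup {s : ℝ | ∃ G : Fin k → SimpleGraph (Fin n), IsKDecomp G ∧ s = ∑ i, Mad (G i)}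

/-- `M^L(k,N)`: maximum of `Mad(G_1)+…+Mad(G_k)` over all lists of `k` finite graphs
with `N` edges in total. -/
noncomputable def MSumL (k N : ℕ) : ℝ :=
  sSup {s : ℝ | ∃ (V : Fin k → Type) (hV : ∀ i, Fintype (V i)) (G : ∀ i, SimpleGraph (V i)),
    (∑ i, @edgeCnt (V i) (hV i) (G i)) = N ∧ s = ∑ i, @Mad (V i) (hV i) (G i)}

/-- `g(m)`: maximum of `Mad(G)` over all finite simple graphs with exactly `m` edges. -/
noncomputable def gMax (m : ℕ) : ℝ :=
  sSup {d : ℝ | ∃ (V : Type) (hV : Fintype V) (G : SimpleGraph V),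
    @edgeCnt V hV G = m ∧ d = @Mad V hV G}

/-- The complete graph on the vertex subset `S` inside `Fin n`. -/
def cliqueOn {n : ℕ} (S : Finset (Fin n)) : SimpleGraph (Fin n) :=
  SimpleGraph.fromRel (fun a b => a ∈ S ∧ b ∈ S)

/-! ### Auxiliary lemmas -/

open SimpleGraph

section Aux

lemma two_mul_choose_two (n : ℕ) : 2 * n.choose 2 = n * (n - 1) := by
  rw [Nat.choose_two_right, Nat.mul_div_cancel' (Nat.even_mul_pred_self n).two_dvd]

lemma nat_le1 {n p e : ℕ} (hnp : n ≤ p) (he : e ≤ n.choose 2) : 2 * e ≤ n * (p - 1) := by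
  have h1 : 2 * e ≤ n * (n - 1) := by rw [← two_mul_choose_two]; omega
  exact h1.trans (Nat.mul_le_mul_left n (by omega))

lemma nat_le2 {n p e : ℕ} (hpn : p ≤ n) (he : e ≤ p.choose 2) : 2 * e ≤ n * (p - 1) := by
  have h1 : 2 * e ≤ p * (p - 1) := by rw [← two_mul_choose_two]; omega
  exact h1.trans (Nat.mul_le_mul_right _ hpn)

lemma nat_eq1 {n p e : ℕ} (hp : 2 ≤ p) (hn : 0 < n) (he1 : e ≤ n.choose 2)
    (he2 : e ≤ p.choose 2) (heq : 2 * e = n * (p - 1)) : n = p ∧ e = p.choose 2 := by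
  obtain ⟨q, rfl⟩ : ∃ q, p = q + 1 := ⟨p - 1, by omega⟩
  have h2 : 2 * n.choose 2 = n * (n - 1) := two_mul_choose_two n
  have h3 : 2 * (q + 1).choose 2 = (q + 1) * q := by rw [two_mul_choose_two]; simp
  simp only [Nat.add_sub_cancel] at heq
  have hnq : n = q + 1 := by
    rcases le_or_gt n (q + 1) with h | h
    · have h4 : n * q ≤ n * (n - 1) := by omega
      have := Nat.le_of_mul_le_mul_left h4 hn
      omega
    · have : (q + 1) * q < n * q := by
        apply Nat.mul_lt_mul_of_lt_of_le h (le_refl q) (by omega)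
      omega
  subst hnq
  exact ⟨rfl, by omega⟩

lemma nat_eq3 {e m n p : ℕ} (hm : 0 < m) (he : e ≤ m) (hn : p + 1 ≤ n)
    (heq : 2 * e * (p + 1) = 2 * m * n) : e = m ∧ n = p + 1 := by
  have h1 : 2 * m * n ≤ 2 * m * (p + 1) := by
    rw [← heq]
    exact Nat.mul_le_mul_right _ (by omega)
  have hn' : n ≤ p + 1 := Nat.le_of_mul_le_mul_left h1 (by omega)
  have hn2 : n = p + 1 := le_antisymm hn' hn
  subst hn2
  refine ⟨?_, rfl⟩
  have : 2 * e * (p + 1) = 2 * m * (p + 1) := heq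
  have := Nat.eq_of_mul_eq_mul_right (by omega : 0 < p + 1) this
  omega

variable {V : Type} [Fintype V] (G : SimpleGraph V) (X : Finset V)

lemma ncard_edgeSet_eq {W : Type} (H : SimpleGraph W) [Fintype H.edgeSet] :
    H.edgeSet.ncard = H.edgeFinset.card :=
  Set.ncard_eq_toFinset_card' _

lemma inducedEdgeCnt_eq :
    inducedEdgeCnt G X = (G.induce (↑X : Set V)).edgeSet.ncard := by
  classical
  have hinj : Function.Injective (Sym2.map (Subtype.val : (↑X : Set V) → V)) :=
    Sym2.map.injective Subtype.val_injective
  have himg : (Sym2.map (Subtype.val : (↑X : Set V) → V)) '' (G.induce (↑X : Set V)).edgeSet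
      = {e : Sym2 V | e ∈ G.edgeSet ∧ ∀ v ∈ e, v ∈ X} := by
    ext e
    constructor
    · rintro ⟨e', he', rfl⟩
      induction e' using Sym2.ind with
      | _ a b =>
        simp only [SimpleGraph.mem_edgeSet, comap_adj] at he' ⊢
        refine ⟨?_, ?_⟩
        · simpa using he'
        · intro v hv
          rw [Sym2.map_pair_eq, Sym2.mem_iff] at hv
          rcases hv with rfl | rfl
          · exact a.2
          · exact b.2
    · rintro ⟨he, hX⟩
      induction e using Sym2.ind with
      | _ a b =>
        have ha : a ∈ X := hX a (by simp)
        have hb : b ∈ X := hX b (by simp)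
        exact ⟨s(⟨a, ha⟩, ⟨b, hb⟩), by simpa using he, by simp⟩
  rw [inducedEdgeCnt, ← himg, Set.ncard_image_of_injective _ hinj]

lemma inducedEdgeCnt_le_choose : inducedEdgeCnt G X ≤ (X.card).choose 2 := by
  classical
  rw [inducedEdgeCnt_eq, ncard_edgeSet_eq]
  have := SimpleGraph.card_edgeFinset_le_card_choose_two (G := G.induce (↑X : Set V))
  simpa using this

lemma adj_of_inducedEdgeCnt_eq (h : inducedEdgeCnt G X = (X.card).choose 2) :
    ∀ a ∈ X, ∀ b ∈ X, a ≠ b → G.Adj a b := by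
  classical
  rw [inducedEdgeCnt_eq, ncard_edgeSet_eq] at h
  have hcard : Fintype.card (↑X : Set V) = X.card := by simp
  have htop : (G.induce (↑X : Set V)).edgeFinset.card
      = (⊤ : SimpleGraph (↑X : Set V)).edgeFinset.card := by
    rw [SimpleGraph.card_edgeFinset_top_eq_card_choose_two, hcard, h]
  have hsub : (G.induce (↑X : Set V)).edgeFinset ⊆ (⊤ : SimpleGraph (↑X : Set V)).edgeFinset := by
    intro e he
    simp only [SimpleGraph.mem_edgeFinset] at he ⊢
    exact (SimpleGraph.edgeSet_subset_edgeSet.2 le_top) he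
  have heq := Finset.eq_of_subset_of_card_le hsub (le_of_eq htop.symm)
  intro a ha b hb hab
  have h1 : (⊤ : SimpleGraph (↑X : Set V)).Adj ⟨a, ha⟩ ⟨b, hb⟩ := by
    simp [Subtype.ext_iff, hab]
  have h2 : s((⟨a, ha⟩ : (↑X : Set V)), ⟨b, hb⟩) ∈ (G.induce (↑X : Set V)).edgeFinset := by
    rw [heq]; simpa [SimpleGraph.mem_edgeFinset] using h1
  simpa [SimpleGraph.mem_edgeFinset] using h2

lemma inducedEdgeCnt_of_clique (h : G.IsClique (↑X : Set V)) :
    inducedEdgeCnt G X = (X.card).choose 2 := by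
  classical
  have h2 : G.induce (↑X : Set V) = ⊤ := by
    ext a b
    simp only [comap_adj, top_adj]
    constructor
    · exact fun h' hab => G.loopless.irrefl _ (by rw [hab] at h'; exact h')
    · intro hne
      exact h a.2 b.2 (fun hc => hne (Subtype.ext hc))
  rw [inducedEdgeCnt_eq, h2, ncard_edgeSet_eq,
    SimpleGraph.card_edgeFinset_top_eq_card_choose_two]
  simp

lemma inducedEdgeCnt_le_edgeCnt : inducedEdgeCnt G X ≤ edgeCnt G :=
  Set.ncard_le_ncard (fun _ he => he.1) G.edgeSet.toFinite

lemma edges_in_of_eq (h : inducedEdgeCnt G X = edgeCnt G) :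
    ∀ e ∈ G.edgeSet, ∀ v ∈ e, v ∈ X := by
  have h2 := Set.eq_of_subset_of_ncard_le (s := {e : Sym2 V | e ∈ G.edgeSet ∧ ∀ v ∈ e, v ∈ X})
    (t := G.edgeSet) (fun _ he => he.1) (le_of_eq h.symm) G.edgeSet.toFinite
  intro e he
  rw [← h2] at he
  exact he.2

lemma inducedEdgeCnt_eq_of_support_subset {Y : Finset V} (hY : G.support ⊆ ↑Y) :
    inducedEdgeCnt G Y = edgeCnt G := by
  unfold inducedEdgeCnt edgeCnt
  congr 1
  ext e
  simp only [Set.mem_setOf_eq]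
  refine ⟨fun h => h.1, fun h => ⟨h, ?_⟩⟩
  induction e using Sym2.ind with
  | _ a b =>
    intro v hv
    rw [Sym2.mem_iff] at hv
    rw [SimpleGraph.mem_edgeSet] at h
    rcases hv with rfl | rfl
    · exact hY ⟨b, h⟩
    · exact hY ⟨a, h.symm⟩

lemma support_subset_of_edges_in (h : ∀ e ∈ G.edgeSet, ∀ v ∈ e, v ∈ X) :
    G.support ⊆ ↑X := by
  rintro v ⟨w, hw⟩
  exact h s(v, w) hw v (by simp)

lemma inducedEdgeCnt_univ : inducedEdgeCnt G Finset.univ = edgeCnt G := by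
  unfold inducedEdgeCnt edgeCnt
  congr 1
  ext e; simp

lemma madSet_finite :
    {d : ℝ | ∃ X : Finset V, X.Nonempty ∧
      d = 2 * (inducedEdgeCnt G X : ℝ) / (X.card : ℝ)}.Finite := by
  apply Set.Finite.subset (Set.finite_range
    (fun X : Finset V => 2 * (inducedEdgeCnt G X : ℝ) / (X.card : ℝ)))
  rintro d ⟨X, _, rfl⟩
  exact ⟨X, rfl⟩

lemma le_Mad {X : Finset V} (hX : X.Nonempty) :
    2 * (inducedEdgeCnt G X : ℝ) / (X.card : ℝ) ≤ Mad G :=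
  le_csSup (madSet_finite G).bddAbove ⟨X, hX, rfl⟩

lemma Mad_le {c : ℝ} (hc : 0 ≤ c)
    (h : ∀ X : Finset V, X.Nonempty → 2 * (inducedEdgeCnt G X : ℝ) / (X.card : ℝ) ≤ c) :
    Mad G ≤ c := by
  apply Real.sSup_le _ hc
  rintro d ⟨X, hX, rfl⟩
  exact h X hX

lemma Mad_mem [Nonempty V] :
    ∃ X : Finset V, X.Nonempty ∧ Mad G = 2 * (inducedEdgeCnt G X : ℝ) / (X.card : ℝ) := by
  have hne : {d : ℝ | ∃ X : Finset V, X.Nonempty ∧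
      d = 2 * (inducedEdgeCnt G X : ℝ) / (X.card : ℝ)}.Nonempty := by
    obtain ⟨v⟩ := ‹Nonempty V›
    exact ⟨_, ⟨{v}, Finset.singleton_nonempty v, rfl⟩⟩
  exact hne.csSup_mem (madSet_finite G)

lemma cast_p_sub_one {p : ℕ} (hp : 2 ≤ p) : ((p - 1 : ℕ) : ℝ) = (p : ℝ) - 1 := by
  have h1 : 1 ≤ p := by omega
  push_cast [Nat.cast_sub h1]
  ring

lemma ratio_le_of_nat {e n : ℕ} (hn : 0 < n) {c : ℝ} (h : ((2 * e : ℕ) : ℝ) ≤ c * n) :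
    2 * (e : ℝ) / (n : ℝ) ≤ c := by
  rw [div_le_iff₀ (by exact_mod_cast hn)]
  push_cast at h
  linarith

lemma Mad_le_of_le_choose {p : ℕ} (hp : 2 ≤ p) (hm : edgeCnt G ≤ p.choose 2) :
    Mad G ≤ (p : ℝ) - 1 := by
  apply Mad_le G (by push_cast; linarith [show (2 : ℝ) ≤ (p : ℝ) by exact_mod_cast hp])
  intro X hX
  have hn : 0 < X.card := Finset.card_pos.2 hX
  have hnat : 2 * inducedEdgeCnt G X ≤ X.card * (p - 1) := by
    rcases le_total X.card p with h | h
    · exact nat_le1 h (inducedEdgeCnt_le_choose G X)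
    · exact nat_le2 h ((inducedEdgeCnt_le_edgeCnt G X).trans hm)
  apply ratio_le_of_nat hn
  calc ((2 * inducedEdgeCnt G X : ℕ) : ℝ) ≤ ((X.card * (p - 1) : ℕ) : ℝ) := by exact_mod_cast hnat
    _ = ((p : ℝ) - 1) * X.card := by push_cast [cast_p_sub_one hp]; ring

lemma Mad_le_max {p : ℕ} (hp : 2 ≤ p) :
    Mad G ≤ max ((p : ℝ) - 1) (2 * (edgeCnt G : ℝ) / ((p : ℝ) + 1)) := by
  have hp1 : (0 : ℝ) ≤ (p : ℝ) - 1 := by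
    have : (2 : ℝ) ≤ (p : ℝ) := by exact_mod_cast hp
    linarith
  apply Mad_le G (le_max_of_le_left hp1)
  intro X hX
  have hn : 0 < X.card := Finset.card_pos.2 hX
  rcases le_or_gt X.card p with h | h
  · apply le_max_of_le_left
    apply ratio_le_of_nat hn
    have hnat := nat_le1 h (inducedEdgeCnt_le_choose G X)
    calc ((2 * inducedEdgeCnt G X : ℕ) : ℝ) ≤ ((X.card * (p - 1) : ℕ) : ℝ) := by
          exact_mod_cast hnat
      _ = ((p : ℝ) - 1) * X.card := by push_cast [cast_p_sub_one hp]; ring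
  · apply le_max_of_le_right
    have he := inducedEdgeCnt_le_edgeCnt G X
    have hcard : (p : ℝ) + 1 ≤ (X.card : ℝ) := by exact_mod_cast h
    have h1 : 2 * (inducedEdgeCnt G X : ℝ) ≤ 2 * (edgeCnt G : ℝ) := by
      have : (inducedEdgeCnt G X : ℝ) ≤ (edgeCnt G : ℝ) := by exact_mod_cast he
      linarith
    exact div_le_div₀ (by positivity) h1 (by positivity) hcard

lemma support_card_lower {p : ℕ} (h : p.choose 2 < edgeCnt G) :
    p + 1 ≤ G.support.ncard := by
  classical
  set Y : Finset V := G.support.toFinite.toFinset with hY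
  have hYsupp : (↑Y : Set V) = G.support := Set.Finite.coe_toFinset _
  have hEY : inducedEdgeCnt G Y = edgeCnt G :=
    inducedEdgeCnt_eq_of_support_subset G (by rw [hYsupp])
  have h2 : edgeCnt G ≤ Y.card.choose 2 := hEY ▸ inducedEdgeCnt_le_choose G Y
  have h3 : p < Y.card := by
    by_contra hc
    push_neg at hc
    have h5 : edgeCnt G ≤ p.choose 2 := h2.trans (Nat.choose_le_choose 2 hc)
    omega
  have h4 : G.support.ncard = Y.card := by
    rw [← hYsupp, Set.ncard_coe_finset]
  omega

lemma nonempty_of_edgeCnt_pos (h : 0 < edgeCnt G) : Nonempty V := by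
  have : G.edgeSet.Nonempty := Set.nonempty_of_ncard_ne_zero (by unfold edgeCnt at h; omega)
  obtain ⟨e, _⟩ := this
  induction e using Sym2.ind with
  | _ a b => exact ⟨a⟩

lemma ratio_choose {p : ℕ} (hp : 2 ≤ p) :
    2 * ((p.choose 2 : ℕ) : ℝ) / (p : ℝ) = (p : ℝ) - 1 := by
  have h1 : ((2 * p.choose 2 : ℕ) : ℝ) = (p : ℝ) * ((p : ℝ) - 1) := by
    rw [two_mul_choose_two]
    push_cast [cast_p_sub_one hp]
    ring
  have hp0 : (p : ℝ) ≠ 0 := by positivity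
  field_simp
  push_cast at h1
  linarith

end Aux

section Gpr

lemma fin_filter_card (n k : ℕ) (h : k ≤ n) :
    (Finset.univ.filter (fun i : Fin n => i.val < k)).card = k := by
  classical
  have h2 : Finset.univ.filter (fun i : Fin n => i.val < k)
      = Finset.univ.map (Fin.castLEEmb h) := by
    ext j
    simp only [Finset.mem_filter, Finset.mem_univ, true_and, Finset.mem_map]
    constructor
    · intro hj
      refine ⟨⟨j.val, hj⟩, ?_⟩
      simp [Fin.castLEEmb, Fin.castLE, Fin.ext_iff]
    · rintro ⟨i, _, rfl⟩
      simpa using i.2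
  rw [h2, Finset.card_map, Finset.card_univ, Fintype.card_fin]

/-- The extremal graph: `K_p` on the first `p` vertices of `Fin (p+1)`, plus `r` edges
joining the last vertex to the first `r` vertices. -/
def Gpr (p r : ℕ) : SimpleGraph (Fin (p + 1)) :=
  SimpleGraph.fromRel (fun a b => (a.val < p ∧ b.val < p) ∨ a.val < r ∨ b.val < r)

lemma Gpr_adj {p r : ℕ} (a b : Fin (p + 1)) :
    (Gpr p r).Adj a b ↔ a ≠ b ∧ ((a.val < p ∧ b.val < p) ∨ a.val < r ∨ b.val < r) := by
  simp only [Gpr, SimpleGraph.fromRel_adj]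
  tauto

lemma Gpr_clique {p r : ℕ} :
    (Gpr p r).IsClique (↑(Finset.univ.filter (fun i : Fin (p + 1) => i.val < p)) :
      Set (Fin (p + 1))) := by
  intro a ha b hb hab
  simp only [Finset.coe_filter, Set.mem_setOf_eq, Finset.mem_coe,
    Finset.mem_filter] at ha hb
  rw [Gpr_adj]
  exact ⟨hab, Or.inl ⟨ha.2, hb.2⟩⟩

lemma Gpr_edgeCnt {p r : ℕ} (hr : r < p) : edgeCnt (Gpr p r) = p.choose 2 + r := by
  classical
  set Xp : Finset (Fin (p + 1)) := Finset.univ.filter (fun i => i.val < p) with hXp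
  have hXpcard : Xp.card = p := fin_filter_card (p + 1) p (by omega)
  have hclique : (Gpr p r).IsClique (↑Xp : Set (Fin (p + 1))) := Gpr_clique
  set S2 : Set (Sym2 (Fin (p + 1))) :=
    {e | e ∈ (Gpr p r).edgeSet ∧ ∀ v ∈ e, v ∈ Xp} with hS2
  set S1 : Set (Sym2 (Fin (p + 1))) :=
    (fun i : Fin (p + 1) => s(i, Fin.last p)) '' {i : Fin (p + 1) | i.val < r} with hS1
  have hlastval : (Fin.last p).val = p := rfl
  have hunion : (Gpr p r).edgeSet = S2 ∪ S1 := by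
    ext e
    induction e using Sym2.ind with
    | _ a b =>
      constructor
      · intro he
        rw [SimpleGraph.mem_edgeSet, Gpr_adj] at he
        obtain ⟨hab, hc⟩ := he
        by_cases hap : a.val < p
        · by_cases hbp : b.val < p
          · left
            refine ⟨by rw [SimpleGraph.mem_edgeSet, Gpr_adj]; exact ⟨hab, Or.inl ⟨hap, hbp⟩⟩, ?_⟩
            intro v hv
            rw [Sym2.mem_iff] at hv
            rcases hv with rfl | rfl <;> simp [hXp, hap, hbp]
          · have hb : b = Fin.last p := by
              apply Fin.ext; have := b.isLt; omega
            right
            have har : a.val < r := by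
              subst hb
              rcases hc with ⟨_, h⟩ | h | h
              · omega
              · exact h
              · omega
            exact ⟨a, har, by rw [hb]⟩
        · have ha : a = Fin.last p := by apply Fin.ext; have := a.isLt; omega
          right
          have hbr : b.val < r := by
            subst ha
            rcases hc with ⟨h, _⟩ | h | h
            · omega
            · omega
            · exact h
          exact ⟨b, hbr, by rw [ha, Sym2.eq_swap]⟩
      · rintro (⟨he, _⟩ | ⟨i, hi, he⟩)
        · exact he
        · rw [← he, SimpleGraph.mem_edgeSet, Gpr_adj]
          refine ⟨?_, Or.inr (Or.inl hi)⟩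
          intro h
          have h2 : i.val = p := by rw [h, hlastval]
          simp only [Set.mem_setOf_eq] at hi
          omega
  have hdisj : Disjoint S2 S1 := by
    rw [Set.disjoint_left]
    rintro e ⟨_, hall⟩ ⟨i, hi, rfl⟩
    have : Fin.last p ∈ Xp := hall _ (Sym2.mem_mk_right _ _)
    simp [hXp] at this
  have hS1card : S1.ncard = r := by
    have hinj : Set.InjOn (fun i : Fin (p + 1) => s(i, Fin.last p))
        {i : Fin (p + 1) | i.val < r} := by
      intro i hi j hj hij
      simp only [Sym2.eq, Sym2.rel_iff', Prod.mk.injEq, Prod.swap_prod_mk] at hij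
      rcases hij with ⟨h1, _⟩ | ⟨h1, h2⟩
      · exact h1
      · exfalso
        have h3 : i.val = p := by rw [h1]; rfl
        simp only [Set.mem_setOf_eq] at hi
        omega
    rw [hS1, Set.ncard_image_of_injOn hinj]
    have h4 : {i : Fin (p + 1) | i.val < r}
        = ↑(Finset.univ.filter (fun i : Fin (p + 1) => i.val < r)) := by
      ext i; simp
    rw [h4, Set.ncard_coe_finset, fin_filter_card (p + 1) r (by omega)]
  have hS2card : S2.ncard = p.choose 2 := by
    have := inducedEdgeCnt_of_clique (Gpr p r) Xp hclique
    rw [hXpcard] at this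
    exact this
  rw [edgeCnt, hunion, Set.ncard_union_eq hdisj (Set.toFinite _) (Set.toFinite _),
    hS1card, hS2card]

lemma Gpr_Mad {p r : ℕ} (hp : 2 ≤ p) (hr : r < p) :
    Mad (Gpr p r) = max ((p : ℝ) - 1)
      (2 * ((p.choose 2 + r : ℕ) : ℝ) / ((p : ℝ) + 1)) := by
  classical
  have hm := Gpr_edgeCnt (p := p) hr
  apply le_antisymm
  · have := Mad_le_max (Gpr p r) hp
    rw [hm] at this
    exact this
  · apply max_le
    · -- the clique on the first p vertices
      set Xp : Finset (Fin (p + 1)) := Finset.univ.filter (fun i => i.val < p) with hXp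
      have hXpcard : Xp.card = p := fin_filter_card (p + 1) p (by omega)
      have hne : Xp.Nonempty := Finset.card_pos.1 (by omega)
      have hE : inducedEdgeCnt (Gpr p r) Xp = p.choose 2 := by
        have := inducedEdgeCnt_of_clique (Gpr p r) Xp Gpr_clique
        rw [hXpcard] at this
        exact this
      have := le_Mad (Gpr p r) hne
      rw [hE, hXpcard] at this
      calc (p : ℝ) - 1 = 2 * ((p.choose 2 : ℕ) : ℝ) / (p : ℝ) := (ratio_choose hp).symm
        _ ≤ Mad (Gpr p r) := this
    · have hne : (Finset.univ : Finset (Fin (p + 1))).Nonempty := Finset.univ_nonempty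
      have := le_Mad (Gpr p r) hne
      rw [inducedEdgeCnt_univ, hm, Finset.card_univ, Fintype.card_fin] at this
      calc 2 * ((p.choose 2 + r : ℕ) : ℝ) / ((p : ℝ) + 1)
          = 2 * ((p.choose 2 + r : ℕ) : ℝ) / (((p + 1 : ℕ) : ℝ)) := by push_cast; ring_nf
        _ ≤ Mad (Gpr p r) := this

lemma topFin_edgeCnt {p : ℕ} : edgeCnt (⊤ : SimpleGraph (Fin p)) = p.choose 2 := by
  classical
  rw [edgeCnt, ncard_edgeSet_eq, SimpleGraph.card_edgeFinset_top_eq_card_choose_two,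
    Fintype.card_fin]

lemma topFin_Mad {p : ℕ} (hp : 2 ≤ p) : Mad (⊤ : SimpleGraph (Fin p)) = (p : ℝ) - 1 := by
  classical
  apply le_antisymm
  · exact Mad_le_of_le_choose _ hp (le_of_eq topFin_edgeCnt)
  · have hpos : 0 < p := by omega
    have : Nonempty (Fin p) := ⟨⟨0, hpos⟩⟩
    have hne : (Finset.univ : Finset (Fin p)).Nonempty := Finset.univ_nonempty
    have h := le_Mad (⊤ : SimpleGraph (Fin p)) hne
    rw [inducedEdgeCnt_univ, topFin_edgeCnt, Finset.card_univ, Fintype.card_fin] at h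
    rw [← ratio_choose hp]
    exact h

lemma gMax_eq {m : ℕ} {v : ℝ} (hv : 0 ≤ v)
    (hub : ∀ (V : Type) (hV : Fintype V) (G : SimpleGraph V),
      @edgeCnt V hV G = m → @Mad V hV G ≤ v)
    (hwit : ∃ (V : Type) (hV : Fintype V) (G : SimpleGraph V),
      @edgeCnt V hV G = m ∧ @Mad V hV G = v) :
    gMax m = v := by
  apply le_antisymm
  · apply Real.sSup_le _ hv
    rintro d ⟨V, hV, G, hm, rfl⟩
    exact hub V hV G hm
  · obtain ⟨V, hV, G, hm, hMad⟩ := hwit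
    apply le_csSup
    · exact ⟨v, by rintro d ⟨V', hV', G', hm', rfl⟩; exact hub V' hV' G' hm'⟩
    · exact ⟨V, hV, G, hm, hMad.symm⟩

end Gpr


section Extract

variable {V : Type} [Fintype V] (G : SimpleGraph V)

lemma extract_eq1 {p : ℕ} (hp : 2 ≤ p)
    (hpos : 0 < edgeCnt G) (hMadG : Mad G = (p : ℝ) - 1) :
    ∃ X : Finset V, X.Nonempty ∧ 2 * inducedEdgeCnt G X = X.card * (p - 1) := by
  have : Nonempty V := nonempty_of_edgeCnt_pos G hpos
  obtain ⟨X, hX, hval⟩ := Mad_mem G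
  refine ⟨X, hX, ?_⟩
  have hn : 0 < X.card := Finset.card_pos.2 hX
  have hne : (X.card : ℝ) ≠ 0 := by positivity
  rw [hMadG, eq_comm, div_eq_iff hne] at hval
  have hrr : 2 * (inducedEdgeCnt G X : ℝ) = (X.card : ℝ) * ((p - 1 : ℕ) : ℝ) := by
    rw [cast_p_sub_one hp]; linarith
  exact_mod_cast hrr

lemma extract_eq2 {p m : ℕ}
    (hpos : 0 < edgeCnt G) (hMadG : Mad G = 2 * ((m : ℕ) : ℝ) / ((p : ℝ) + 1)) :
    ∃ X : Finset V, X.Nonempty ∧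
      2 * inducedEdgeCnt G X * (p + 1) = 2 * m * X.card := by
  have : Nonempty V := nonempty_of_edgeCnt_pos G hpos
  obtain ⟨X, hX, hval⟩ := Mad_mem G
  refine ⟨X, hX, ?_⟩
  have hn : 0 < X.card := Finset.card_pos.2 hX
  have hne : (X.card : ℝ) ≠ 0 := by positivity
  have hpe : ((p : ℝ) + 1) ≠ 0 := by positivity
  rw [hMadG] at hval
  rw [div_eq_div_iff hpe hne] at hval
  -- hval : 2 * m * n = 2 * e * (p+1)
  have hrr : 2 * (inducedEdgeCnt G X : ℝ) * ((p : ℝ) + 1)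
      = 2 * (m : ℝ) * (X.card : ℝ) := by linarith
  have hrr2 : ((2 * inducedEdgeCnt G X * (p + 1) : ℕ) : ℝ)
      = ((2 * m * X.card : ℕ) : ℝ) := by push_cast; push_cast at hrr; linarith
  exact_mod_cast hrr2

lemma nclique_of_eq {p : ℕ} {X : Finset V} (hnp : X.card = p)
    (hE : inducedEdgeCnt G X = p.choose 2) : G.IsNClique p X := by
  refine (SimpleGraph.isNClique_iff _).2 ⟨?_, hnp⟩
  intro a ha b hb hne
  exact adj_of_inducedEdgeCnt_eq G X (by rw [hnp]; exact hE) a (Finset.mem_coe.1 ha)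
    b (Finset.mem_coe.1 hb) hne

lemma support_eq_of_all_edges {p : ℕ} (hmG' : p.choose 2 < edgeCnt G) {X : Finset V}
    (hXcard : X.card = p + 1) (hEm : inducedEdgeCnt G X = edgeCnt G) :
    G.support.ncard = p + 1 := by
  have hsub := support_subset_of_edges_in G X (edges_in_of_eq G X hEm)
  have hupp : G.support.ncard ≤ X.card := by
    have := Set.ncard_le_ncard hsub X.finite_toSet
    rwa [Set.ncard_coe_finset] at this
  have hlow := support_card_lower G hmG'
  omega

lemma clique_ge_Mad {p : ℕ} (hp : 2 ≤ p) (hex : ∃ S : Finset V, G.IsNClique p S) :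
    (p : ℝ) - 1 ≤ Mad G := by
  obtain ⟨S, hS⟩ := hex
  obtain ⟨hSc, hScard⟩ := (SimpleGraph.isNClique_iff _).1 hS
  have hSne : S.Nonempty := Finset.card_pos.1 (by omega)
  have hE : inducedEdgeCnt G S = p.choose 2 := by
    rw [inducedEdgeCnt_of_clique G S hSc, hScard]
  have h := le_Mad G hSne
  rw [hE, hScard] at h
  rw [← ratio_choose hp]
  exact h

lemma supp_ge_Mad {p : ℕ} (hs : G.support.ncard = p + 1) :
    2 * ((edgeCnt G : ℕ) : ℝ) / ((p : ℝ) + 1) ≤ Mad G := by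
  classical
  set Y : Finset V := G.support.toFinite.toFinset with hY
  have hYsupp : (↑Y : Set V) = G.support := Set.Finite.coe_toFinset _
  have hYcard : Y.card = p + 1 := by
    have h1 := Set.ncard_coe_finset Y
    rw [hYsupp, hs] at h1
    omega
  have hYne : Y.Nonempty := Finset.card_pos.1 (by omega)
  have hE := inducedEdgeCnt_eq_of_support_subset G (Y := Y) (by rw [hYsupp])
  have h := le_Mad G hYne
  rw [hE, hYcard] at h
  calc 2 * ((edgeCnt G : ℕ) : ℝ) / ((p : ℝ) + 1)
      = 2 * ((edgeCnt G : ℕ) : ℝ) / (((p + 1 : ℕ)) : ℝ) := by norm_cast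
    _ ≤ Mad G := h

end Extract

/-- single graph optimizing `Mad`: the value of `g(m)` and the
characterization of the extremal graphs. -/
theorem gMax_formula_and_extremal (p : ℕ) (hp : 2 ≤ p) :
    (gMax (Nat.choose p 2) = (p : ℝ) - 1 ∧
      ∀ (V : Type) [Fintype V] (G : SimpleGraph V), edgeCnt G = Nat.choose p 2 →
        (Mad G = (p : ℝ) - 1 ↔ (G.IsClique G.support ∧ G.support.ncard = p))) ∧
    (∀ r : ℕ, 0 < r → r < p →
      gMax (Nat.choose p 2 + r) =
        max ((p : ℝ) - 1) (2 * ((Nat.choose p 2 + r : ℕ) : ℝ) / ((p : ℝ) + 1)) ∧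
      ∀ (V : Type) [Fintype V] (G : SimpleGraph V), edgeCnt G = Nat.choose p 2 + r →
        ((2 * r + 1 < p →
            (Mad G = gMax (Nat.choose p 2 + r) ↔ ∃ S : Finset V, G.IsNClique p S)) ∧
         (p < 2 * r + 1 →
            (Mad G = gMax (Nat.choose p 2 + r) ↔ G.support.ncard = p + 1)) ∧
         (p = 2 * r + 1 →
            (Mad G = gMax (Nat.choose p 2 + r) ↔
              ((∃ S : Finset V, G.IsNClique p S) ∨ G.support.ncard = p + 1))))) := by
  have hp2 : (2 : ℝ) ≤ (p : ℝ) := by exact_mod_cast hp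
  have hp1pos : (0 : ℝ) < (p : ℝ) + 1 := by positivity
  constructor
  · -- Part (i)
    constructor
    · -- value of gMax
      apply gMax_eq (by linarith)
      · intro V hV G hm
        exact Mad_le_of_le_choose G hp (le_of_eq hm)
      · exact ⟨Fin p, inferInstance, ⊤, topFin_edgeCnt, topFin_Mad hp⟩
    · intro V _ G hm
      constructor
      · -- forward: Mad = p−1 → support is a p-clique
        intro hMadG
        have hpos : 0 < edgeCnt G := by
          rw [hm]; exact Nat.choose_pos hp
        obtain ⟨X, hX, heq⟩ := extract_eq1 G hp hpos hMadG
        have hn : 0 < X.card := Finset.card_pos.2 hX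
        have he2 : inducedEdgeCnt G X ≤ p.choose 2 :=
          (inducedEdgeCnt_le_edgeCnt G X).trans (le_of_eq hm)
        obtain ⟨hnp, hE⟩ := nat_eq1 hp hn (inducedEdgeCnt_le_choose G X) he2 heq
        have hadj := adj_of_inducedEdgeCnt_eq G X (by rw [hnp]; exact hE)
        have hEm : inducedEdgeCnt G X = edgeCnt G := by rw [hE, hm]
        have hsub : G.support ⊆ ↑X := support_subset_of_edges_in G X (edges_in_of_eq G X hEm)
        have hsub2 : (↑X : Set V) ⊆ G.support := by
          intro v hv
          have hv' : v ∈ X := Finset.mem_coe.1 hv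
          obtain ⟨u, hu, hune⟩ := Finset.exists_mem_ne (by omega : 1 < X.card) v
          exact ⟨u, hadj v hv' u hu (Ne.symm hune)⟩
        have hsupp : G.support = ↑X := Set.Subset.antisymm hsub hsub2
        constructor
        · rw [SimpleGraph.isClique_iff, hsupp]
          intro a ha b hb hne
          exact hadj a (Finset.mem_coe.1 ha) b (Finset.mem_coe.1 hb) hne
        · rw [hsupp, Set.ncard_coe_finset, hnp]
      · -- backward
        rintro ⟨_, hcard⟩
        apply le_antisymm (Mad_le_of_le_choose G hp (le_of_eq hm))
        have h := supp_ge_Mad G (p := p - 1) (by omega)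
        rw [hm] at h
        have hc : ((p - 1 : ℕ) : ℝ) + 1 = (p : ℝ) := by
          rw [cast_p_sub_one hp]; ring
        rw [hc, ratio_choose hp] at h
        exact h
  · -- Part (ii)
    intro r hr0 hrp
    have hr0' : (0 : ℝ) < (r : ℝ) := by exact_mod_cast hr0
    have hrp' : (r : ℝ) < (p : ℝ) := by exact_mod_cast hrp
    have hmnat : 2 * (p.choose 2 + r) = p * (p - 1) + 2 * r := by
      have := two_mul_choose_two p; omega
    have hc2m : 2 * ((p.choose 2 + r : ℕ) : ℝ) = (p : ℝ) * ((p : ℝ) - 1) + 2 * (r : ℝ) := by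
      calc 2 * ((p.choose 2 + r : ℕ) : ℝ) = ((2 * (p.choose 2 + r) : ℕ) : ℝ) := by
            push_cast; ring
        _ = ((p * (p - 1) + 2 * r : ℕ) : ℝ) := by rw [hmnat]
        _ = (p : ℝ) * ((p : ℝ) - 1) + 2 * (r : ℝ) := by
            push_cast [cast_p_sub_one hp]; ring
    have hmpos : 0 < p.choose 2 + r := by
      have := Nat.choose_pos hp; omega
    have hgMax : gMax (p.choose 2 + r)
        = max ((p : ℝ) - 1) (2 * ((p.choose 2 + r : ℕ) : ℝ) / ((p : ℝ) + 1)) := by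
      apply gMax_eq (le_max_of_le_left (by linarith))
      · intro V hV G hm
        have h := @Mad_le_max V hV G p hp
        rw [hm] at h
        exact h
      · exact ⟨Fin (p + 1), inferInstance, Gpr p r, Gpr_edgeCnt hrp, Gpr_Mad hp hrp⟩
    refine ⟨hgMax, ?_⟩
    intro V _ G hmG
    have hMadle : Mad G ≤ max ((p : ℝ) - 1)
        (2 * ((p.choose 2 + r : ℕ) : ℝ) / ((p : ℝ) + 1)) := by
      have h := Mad_le_max G hp
      rw [hmG] at h
      exact h
    have hposE : 0 < edgeCnt G := by rw [hmG]; omega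
    refine ⟨?_, ?_, ?_⟩
    · -- case A : 2r+1 < p
      intro hA
      have hA' : 2 * (r : ℝ) + 1 < (p : ℝ) := by exact_mod_cast hA
      have hlt : 2 * ((p.choose 2 + r : ℕ) : ℝ) / ((p : ℝ) + 1) < (p : ℝ) - 1 := by
        rw [div_lt_iff₀ hp1pos]
        nlinarith
      have hvM : max ((p : ℝ) - 1) (2 * ((p.choose 2 + r : ℕ) : ℝ) / ((p : ℝ) + 1))
          = (p : ℝ) - 1 := max_eq_left hlt.le
      rw [hgMax, hvM]
      constructor
      · intro hMadG
        obtain ⟨X, hX, heq⟩ := extract_eq1 G hp hposE hMadG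
        have hn : 0 < X.card := Finset.card_pos.2 hX
        rcases le_or_gt X.card p with h | h
        · have he2 : inducedEdgeCnt G X ≤ p.choose 2 :=
            (inducedEdgeCnt_le_choose G X).trans (Nat.choose_le_choose 2 h)
          obtain ⟨hnp, hE⟩ := nat_eq1 hp hn (inducedEdgeCnt_le_choose G X) he2 heq
          exact ⟨X, nclique_of_eq G hnp hE⟩
        · exfalso
          have h1 : (p + 1) * (p - 1) ≤ X.card * (p - 1) :=
            Nat.mul_le_mul_right _ (by omega)
          have h2 : inducedEdgeCnt G X ≤ p.choose 2 + r := by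
            have := inducedEdgeCnt_le_edgeCnt G X
            rw [hmG] at this
            exact this
          have h3 := two_mul_choose_two p
          have h4 : (p + 1) * (p - 1) = p * (p - 1) + (p - 1) := Nat.succ_mul p (p - 1)
          omega
      · intro hex
        exact le_antisymm (by rw [hvM] at hMadle; exact hMadle) (clique_ge_Mad G hp hex)
    · -- case B : p < 2r+1
      intro hB
      have hB' : (p : ℝ) < 2 * (r : ℝ) + 1 := by exact_mod_cast hB
      have hgt : (p : ℝ) - 1 < 2 * ((p.choose 2 + r : ℕ) : ℝ) / ((p : ℝ) + 1) := by
        rw [lt_div_iff₀ hp1pos]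
        nlinarith
      have hvM : max ((p : ℝ) - 1) (2 * ((p.choose 2 + r : ℕ) : ℝ) / ((p : ℝ) + 1))
          = 2 * ((p.choose 2 + r : ℕ) : ℝ) / ((p : ℝ) + 1) := max_eq_right hgt.le
      rw [hgMax, hvM]
      constructor
      · intro hMadG
        obtain ⟨X, hX, heq⟩ := extract_eq2 G hposE hMadG
        have hn : 0 < X.card := Finset.card_pos.2 hX
        rcases le_or_gt X.card p with h | h
        · exfalso
          have hle : 2 * (inducedEdgeCnt G X : ℝ) / (X.card : ℝ) ≤ (p : ℝ) - 1 := by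
            apply ratio_le_of_nat hn
            have hnat := nat_le1 h (inducedEdgeCnt_le_choose G X)
            calc ((2 * inducedEdgeCnt G X : ℕ) : ℝ) ≤ ((X.card * (p - 1) : ℕ) : ℝ) := by
                  exact_mod_cast hnat
              _ = ((p : ℝ) - 1) * X.card := by push_cast [cast_p_sub_one hp]; ring
          have hcn : (0 : ℝ) < (X.card : ℝ) := by exact_mod_cast hn
          have hgeq : 2 * (inducedEdgeCnt G X : ℝ) / (X.card : ℝ)
              = 2 * ((p.choose 2 + r : ℕ) : ℝ) / ((p : ℝ) + 1) := by
            rw [div_eq_div_iff (ne_of_gt hcn) (ne_of_gt hp1pos)]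
            have hcast : ((2 * inducedEdgeCnt G X * (p + 1) : ℕ) : ℝ)
                = ((2 * (p.choose 2 + r) * X.card : ℕ) : ℝ) := by exact_mod_cast heq
            push_cast at hcast ⊢
            linarith
          linarith
        · have he2 : inducedEdgeCnt G X ≤ p.choose 2 + r := by
            have := inducedEdgeCnt_le_edgeCnt G X
            rw [hmG] at this
            exact this
          obtain ⟨hEm, hnp1⟩ := nat_eq3 hmpos he2 (by omega) heq
          exact support_eq_of_all_edges G (by rw [hmG]; omega) hnp1 (by rw [hEm, hmG])
      · intro hs
        refine le_antisymm (by rw [hvM] at hMadle; exact hMadle) ?_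
        have h := supp_ge_Mad G (p := p) hs
        rw [hmG] at h
        exact h
    · -- case C : p = 2r+1
      intro hC
      have hC' : (p : ℝ) = 2 * (r : ℝ) + 1 := by exact_mod_cast hC
      have heqv : 2 * ((p.choose 2 + r : ℕ) : ℝ) / ((p : ℝ) + 1) = (p : ℝ) - 1 := by
        rw [div_eq_iff (ne_of_gt hp1pos)]
        nlinarith
      have hvM : max ((p : ℝ) - 1) (2 * ((p.choose 2 + r : ℕ) : ℝ) / ((p : ℝ) + 1))
          = (p : ℝ) - 1 := max_eq_left heqv.le
      rw [hgMax, hvM]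
      constructor
      · intro hMadG
        obtain ⟨X, hX, heq⟩ := extract_eq1 G hp hposE hMadG
        have hn : 0 < X.card := Finset.card_pos.2 hX
        rcases le_or_gt X.card p with h | h
        · left
          have he2 : inducedEdgeCnt G X ≤ p.choose 2 :=
            (inducedEdgeCnt_le_choose G X).trans (Nat.choose_le_choose 2 h)
          obtain ⟨hnp, hE⟩ := nat_eq1 hp hn (inducedEdgeCnt_le_choose G X) he2 heq
          exact ⟨X, nclique_of_eq G hnp hE⟩
        · right
          have he2 : inducedEdgeCnt G X ≤ p.choose 2 + r := by
            have := inducedEdgeCnt_le_edgeCnt G X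
            rw [hmG] at this
            exact this
          have hpm : 2 * (p.choose 2 + r) = (p + 1) * (p - 1) := by
            have h3 := two_mul_choose_two p
            have h4 : (p + 1) * (p - 1) = p * (p - 1) + (p - 1) := Nat.succ_mul p (p - 1)
            omega
          have h1 : X.card * (p - 1) ≤ (p + 1) * (p - 1) := by omega
          have hn1 : X.card ≤ p + 1 := Nat.le_of_mul_le_mul_right h1 (by omega)
          have hncard : X.card = p + 1 := by omega
          have hEm : inducedEdgeCnt G X = p.choose 2 + r := by
            rw [hncard] at heq
            omega
          exact support_eq_of_all_edges G (by rw [hmG]; omega) hncard (by rw [hEm, hmG])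
      · rintro (hex | hs)
        · exact le_antisymm (by rw [hvM] at hMadle; exact hMadle) (clique_ge_Mad G hp hex)
        · refine le_antisymm (by rw [hvM] at hMadle; exact hMadle) ?_
          have h := supp_ge_Mad G (p := p) hs
          rw [hmG, heqv] at h
          exact h
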